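/- Let I, J be k-element subsets of {1, …, n} with complements Ī = {1,…,n}\I and J̄ = {1,…,n}\J, let X = (x_{ij}) be an n×n matrix of independent commuting variables, and let v be a permutation of {1, …, n}. Then the coefficient of the monomial x_{1,v(1)} x_{2,v(2)} ⋯ x_{n,v(n)} in the polynomial Δ_{I,J}(X)·Δ_{Ī,J̄}(X) equals (−1)^{inv_v(I) + inv_v(Ī)} if v(I) = J, and equals 0 if v(I) ≠ J, where inv_v(K) denotes the number of pairs i < j with both i, j ∈ K and v(i) > v(j). -/
import Mathlib


/-- The minor `Δ_{I,J}(X)` of an `n×n` matrix with row set `I` and column set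
`J` (both of cardinality `k`, rows and columns taken in increasing order). -/
noncomputable def minorIJ {R : Type*} [CommRing R] (n k : ℕ)
    (X : Matrix (Fin n) (Fin n) R) (I J : Finset (Fin n))
    (hI : I.card = k) (hJ : J.card = k) : R :=
  Matrix.det (Matrix.of fun a b : Fin k =>
    X (I.orderIsoOfFin hI a) (J.orderIsoOfFin hJ b))

/-- `inv_v(K)`: the number of pairs `i < j` with `i, j ∈ K` and `v(i) > v(j)`. -/
def invOn (n : ℕ) (v : Equiv.Perm (Fin n)) (K : Finset (Fin n)) : ℕ :=
  (Finset.univ.filter fun p : Fin n × Fin n =>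
    p.1 < p.2 ∧ p.1 ∈ K ∧ p.2 ∈ K ∧ v p.2 < v p.1).card

/-! ### Auxiliary lemmas -/

section Aux

open Finset Equiv

theorem prod_ite_neg_one' {α} (s : Finset α) (p : α → Prop) [DecidablePred p] :
    (∏ x ∈ s, if p x then (-1 : ℤˣ) else 1) = (-1) ^ (s.filter p).card := by
  rw [Finset.prod_ite, Finset.prod_const, Finset.prod_const, one_pow, mul_one]

/-- the number of inversions of a permutation of `Fin m` -/
def invCount' {m : ℕ} (σ : Equiv.Perm (Fin m)) : ℕ :=
  (Finset.univ.filter fun p : Fin m × Fin m => p.1 < p.2 ∧ σ p.2 < σ p.1).card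

theorem sign_eq_signAux' {m : ℕ} (σ : Equiv.Perm (Fin m)) :
    Equiv.Perm.sign σ = Equiv.Perm.signAux σ := by
  refine Equiv.Perm.swap_induction_on σ ?_ ?_
  · simp [Equiv.Perm.signAux_one]
  · intro f x y hxy ih
    rw [Equiv.Perm.signAux_mul, Equiv.Perm.signAux_swap hxy, map_mul,
      Equiv.Perm.sign_swap hxy, ih]

theorem sign_eq_pow_invCount' {m : ℕ} (σ : Equiv.Perm (Fin m)) :
    Equiv.Perm.sign σ = (-1 : ℤˣ) ^ invCount' σ := by
  rw [sign_eq_signAux', Equiv.Perm.signAux, prod_ite_neg_one']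
  congr 1
  refine Finset.card_bij (fun x _ => (x.2, x.1)) ?_ ?_ ?_
  · rintro ⟨a, b⟩ hx
    rw [Finset.mem_filter, Equiv.Perm.mem_finPairsLT] at hx
    simp only [Finset.mem_filter, Finset.mem_univ, true_and]
    exact ⟨hx.1, lt_of_le_of_ne hx.2 (fun h => ne_of_gt hx.1 (σ.injective h))⟩
  · rintro ⟨a, b⟩ ha ⟨c, d⟩ hc h
    simp only [Prod.mk.injEq] at h
    simp [Sigma.ext_iff, h.1, h.2]
  · rintro ⟨a, b⟩ hb
    simp only [Finset.mem_filter, Finset.mem_univ, true_and] at hb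
    refine ⟨⟨b, a⟩, ?_, rfl⟩
    rw [Finset.mem_filter, Equiv.Perm.mem_finPairsLT]
    exact ⟨hb.1, le_of_lt hb.2⟩

variable {n k : ℕ}

theorem mem_of_image_eq' {I J : Finset (Fin n)} (hJ : J.card = k) (v : Equiv.Perm (Fin n))
    (hv : I.image v = J) (i : Fin k) : v.symm (J.orderIsoOfFin hJ i) ∈ I := by
  have h : ((J.orderIsoOfFin hJ i : Fin n)) ∈ I.image v := by
    rw [hv]; exact (J.orderIsoOfFin hJ i).2
  rw [Finset.mem_image] at h
  obtain ⟨a, ha, hva⟩ := h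
  rwa [← hva, Equiv.symm_apply_apply]

/-- the permutation of `Fin k` induced by `v` between the increasing
enumerations of `I` and `J` -/
noncomputable def sigma0 {n k : ℕ} (I J : Finset (Fin n)) (hI : I.card = k) (hJ : J.card = k)
    (v : Equiv.Perm (Fin n)) (hv : I.image v = J) : Equiv.Perm (Fin k) :=
  Equiv.ofBijective
    (fun i => (I.orderIsoOfFin hI).symm ⟨v.symm (J.orderIsoOfFin hJ i), mem_of_image_eq' hJ v hv i⟩)
    ((Finite.injective_iff_bijective).mp (by
      intro a b hab
      simp only [EmbeddingLike.apply_eq_iff_eq, Subtype.mk.injEq] at hab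
      exact (J.orderIsoOfFin hJ).injective (Subtype.ext hab)))

theorem sigma0_spec {I J : Finset (Fin n)} (hI : I.card = k) (hJ : J.card = k)
    (v : Equiv.Perm (Fin n)) (hv : I.image v = J) (i : Fin k) :
    v (I.orderIsoOfFin hI (sigma0 I J hI hJ v hv i)) = J.orderIsoOfFin hJ i := by
  simp [sigma0, Equiv.ofBijective]

theorem A_iff' {I J : Finset (Fin n)} (hI : I.card = k) (hJ : J.card = k)
    (v : Equiv.Perm (Fin n)) (hv : I.image v = J) (σ : Equiv.Perm (Fin k)) :
    (∀ i, v (I.orderIsoOfFin hI (σ i)) = J.orderIsoOfFin hJ i) ↔ σ = sigma0 I J hI hJ v hv := by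
  constructor
  · intro h
    ext i
    have h3 : (↑((I.orderIsoOfFin hI) (σ i)) : Fin n)
        = ↑((I.orderIsoOfFin hI) (sigma0 I J hI hJ v hv i)) :=
      v.injective (by rw [h i, sigma0_spec hI hJ v hv i])
    have := (I.orderIsoOfFin hI).injective (Subtype.ext h3)
    exact congrArg Fin.val this
  · rintro rfl i
    exact sigma0_spec hI hJ v hv i

theorem image_of_A' {I J : Finset (Fin n)} (hI : I.card = k) (hJ : J.card = k)
    (v : Equiv.Perm (Fin n)) (σ : Equiv.Perm (Fin k))
    (h : ∀ i, v (I.orderIsoOfFin hI (σ i)) = J.orderIsoOfFin hJ i) : I.image v = J := by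
  refine (Finset.eq_of_subset_of_card_le ?_ ?_).symm
  · intro j hj
    rw [Finset.mem_image]
    obtain ⟨i, hi⟩ := (J.orderIsoOfFin hJ).surjective ⟨j, hj⟩
    exact ⟨I.orderIsoOfFin hI (σ i), (I.orderIsoOfFin hI (σ i)).2,
      by rw [h i, hi]⟩
  · rw [Finset.card_image_of_injective _ v.injective, hI, hJ]

theorem invCount_sigma0 {I J : Finset (Fin n)} (hI : I.card = k) (hJ : J.card = k)
    (v : Equiv.Perm (Fin n)) (hv : I.image v = J) :
    invCount' (sigma0 I J hI hJ v hv) = invOn n v I := by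
  set σ₀ := sigma0 I J hI hJ v hv with hσ₀
  set eI := I.orderIsoOfFin hI
  set fJ := J.orderIsoOfFin hJ
  have hlt : ∀ x y : Fin k, (↑(eI x) : Fin n) < ↑(eI y) ↔ x < y := by
    intro x y; rw [Subtype.coe_lt_coe, OrderIso.lt_iff_lt]
  have hltJ : ∀ x y : Fin k, (↑(fJ x) : Fin n) < ↑(fJ y) ↔ x < y := by
    intro x y; rw [Subtype.coe_lt_coe, OrderIso.lt_iff_lt]
  have hspec : ∀ x, v (↑(eI (σ₀ x))) = ↑(fJ x) := sigma0_spec hI hJ v hv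
  refine Finset.card_bij (fun p _ => ((↑(eI (σ₀ p.2)) : Fin n), (↑(eI (σ₀ p.1)) : Fin n)))
    ?_ ?_ ?_
  · rintro ⟨a, b⟩ hp
    simp only [Finset.mem_filter, Finset.mem_univ, true_and] at hp ⊢
    refine ⟨(hlt _ _).mpr hp.2, (eI (σ₀ b)).2, (eI (σ₀ a)).2, ?_⟩
    rw [hspec, hspec]
    exact (hltJ _ _).mpr hp.1
  · rintro ⟨a, b⟩ _ ⟨c, d⟩ _ h
    simp only [Prod.mk.injEq] at h
    have h1 : b = d := σ₀.injective (eI.injective (Subtype.ext h.1))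
    have h2 : a = c := σ₀.injective (eI.injective (Subtype.ext h.2))
    simp [h1, h2]
  · rintro ⟨i1, i2⟩ hq
    simp only [Finset.mem_filter, Finset.mem_univ, true_and] at hq
    obtain ⟨h12, hi1, hi2, hv21⟩ := hq
    have hv1J : v i1 ∈ J := by rw [← hv]; exact Finset.mem_image_of_mem v hi1
    have hv2J : v i2 ∈ J := by rw [← hv]; exact Finset.mem_image_of_mem v hi2
    set b := fJ.symm ⟨v i1, hv1J⟩
    set a := fJ.symm ⟨v i2, hv2J⟩
    have hfb : (↑(fJ b) : Fin n) = v i1 := by simp [b]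
    have hfa : (↑(fJ a) : Fin n) = v i2 := by simp [a]
    have heb : (↑(eI (σ₀ b)) : Fin n) = i1 := by
      apply v.injective; rw [hspec, hfb]
    have hea : (↑(eI (σ₀ a)) : Fin n) = i2 := by
      apply v.injective; rw [hspec, hfa]
    refine ⟨⟨a, b⟩, ?_, by simp [heb, hea]⟩
    simp only [Finset.mem_filter, Finset.mem_univ, true_and]
    constructor
    · rw [← hltJ]; rw [hfa, hfb]; exact hv21
    · rw [← hlt (σ₀ b) (σ₀ a), heb, hea]; exact h12

theorem prod_X_eq_monomial' {α : Type*} (s : Finset α) (f : α → Fin n × Fin n) :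
    (∏ a ∈ s, (MvPolynomial.X (f a) : MvPolynomial (Fin n × Fin n) ℤ))
      = MvPolynomial.monomial (∑ a ∈ s, Finsupp.single (f a) 1) 1 := by
  classical
  induction s using Finset.cons_induction with
  | empty => simp
  | cons a s ha ih =>
      rw [Finset.prod_cons, Finset.sum_cons, ih, MvPolynomial.X,
        MvPolynomial.monomial_mul, mul_one]

theorem T_apply (v : Equiv.Perm (Fin n)) (r c : Fin n) :
    (∑ i : Fin n, Finsupp.single (i, v i) (1 : ℕ)) (r, c) = if v r = c then 1 else 0 := by
  classical
  rw [Finset.sum_apply']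
  rw [Finset.sum_eq_single r]
  · rw [Finsupp.single_apply]
    simp [Prod.ext_iff]
  · intro i _ hir
    rw [Finsupp.single_apply, if_neg]
    simp [Prod.ext_iff]
    intro h; exact absurd h hir
  · simp

theorem one_le_sum_single {m : ℕ} (g : Fin m → Fin n × Fin n) (i₀ : Fin m) :
    1 ≤ (∑ i : Fin m, Finsupp.single (g i) (1 : ℕ)) (g i₀) := by
  classical
  rw [Finset.sum_apply']
  calc (1 : ℕ) = Finsupp.single (g i₀) 1 (g i₀) := by simp
  _ ≤ _ := Finset.single_le_sum (f := fun i => (Finsupp.single (g i) (1 : ℕ)) (g i₀))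
      (fun i _ => Nat.zero_le _) (Finset.mem_univ i₀)

theorem sum_orderIso_perm {m : ℕ} (K : Finset (Fin n)) (hK : K.card = m)
    (σ : Equiv.Perm (Fin m)) (F : Fin n → ((Fin n × Fin n) →₀ ℕ)) :
    ∑ i : Fin m, F (K.orderIsoOfFin hK (σ i)) = ∑ r ∈ K, F r := by
  rw [← Finset.sum_coe_sort K F]
  exact Fintype.sum_equiv (σ.trans (K.orderIsoOfFin hK).toEquiv) _ _ (fun i => rfl)

theorem image_compl_eq (v : Equiv.Perm (Fin n)) (S : Finset (Fin n)) :
    Sᶜ.image v = (S.image v)ᶜ := by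
  ext x
  simp only [Finset.mem_image, Finset.mem_compl]
  constructor
  · rintro ⟨a, ha, rfl⟩ ⟨b, hb, hba⟩
    exact ha (v.injective hba ▸ hb)
  · intro h
    refine ⟨v.symm x, fun hmem => h ⟨v.symm x, hmem, v.apply_symm_apply x⟩, v.apply_symm_apply x⟩

theorem key_iff (I J : Finset (Fin n)) (hI : I.card = k) (hJ : J.card = k)
    (hI' : Iᶜ.card = n - k) (hJ' : Jᶜ.card = n - k)
    (v : Equiv.Perm (Fin n)) (σ : Equiv.Perm (Fin k)) (τ : Equiv.Perm (Fin (n - k))) :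
    ((∑ i : Fin k, Finsupp.single ((I.orderIsoOfFin hI (σ i) : Fin n),
        (J.orderIsoOfFin hJ i : Fin n)) (1 : ℕ))
      + ∑ i : Fin (n - k), Finsupp.single ((Iᶜ.orderIsoOfFin hI' (τ i) : Fin n),
        (Jᶜ.orderIsoOfFin hJ' i : Fin n)) 1)
      = ∑ i : Fin n, Finsupp.single (i, v i) 1
    ↔ (∀ i, v (I.orderIsoOfFin hI (σ i)) = J.orderIsoOfFin hJ i)
      ∧ (∀ i, v (Iᶜ.orderIsoOfFin hI' (τ i)) = Jᶜ.orderIsoOfFin hJ' i) := by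
  classical
  constructor
  · intro heq
    constructor
    · intro i
      by_contra hne
      have h1 : 1 ≤ (∑ i : Fin k, Finsupp.single ((I.orderIsoOfFin hI (σ i) : Fin n),
          (J.orderIsoOfFin hJ i : Fin n)) (1 : ℕ))
          ((I.orderIsoOfFin hI (σ i) : Fin n), (J.orderIsoOfFin hJ i : Fin n)) :=
        one_le_sum_single (fun i => ((I.orderIsoOfFin hI (σ i) : Fin n),
          (J.orderIsoOfFin hJ i : Fin n))) i
      have h3 : (∑ i : Fin n, Finsupp.single (i, v i) (1 : ℕ))
          ((I.orderIsoOfFin hI (σ i) : Fin n), (J.orderIsoOfFin hJ i : Fin n)) = 0 := by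
        rw [T_apply, if_neg hne]
      rw [← heq, Finsupp.add_apply] at h3
      omega
    · intro i
      by_contra hne
      have h1 : 1 ≤ (∑ i : Fin (n - k), Finsupp.single ((Iᶜ.orderIsoOfFin hI' (τ i) : Fin n),
          (Jᶜ.orderIsoOfFin hJ' i : Fin n)) (1 : ℕ))
          ((Iᶜ.orderIsoOfFin hI' (τ i) : Fin n), (Jᶜ.orderIsoOfFin hJ' i : Fin n)) :=
        one_le_sum_single (fun i => ((Iᶜ.orderIsoOfFin hI' (τ i) : Fin n),
          (Jᶜ.orderIsoOfFin hJ' i : Fin n))) i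
      have h3 : (∑ i : Fin n, Finsupp.single (i, v i) (1 : ℕ))
          ((Iᶜ.orderIsoOfFin hI' (τ i) : Fin n), (Jᶜ.orderIsoOfFin hJ' i : Fin n)) = 0 := by
        rw [T_apply, if_neg hne]
      rw [← heq, Finsupp.add_apply] at h3
      omega
  · rintro ⟨hA, hB⟩
    have e1 : (∑ i : Fin k, Finsupp.single ((I.orderIsoOfFin hI (σ i) : Fin n),
        (J.orderIsoOfFin hJ i : Fin n)) (1 : ℕ))
        = ∑ r ∈ I, Finsupp.single (r, v r) 1 := by
      rw [← sum_orderIso_perm I hI σ (fun r => Finsupp.single (r, v r) 1)]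
      exact Finset.sum_congr rfl fun i _ => by rw [hA i]
    have e2 : (∑ i : Fin (n - k), Finsupp.single ((Iᶜ.orderIsoOfFin hI' (τ i) : Fin n),
        (Jᶜ.orderIsoOfFin hJ' i : Fin n)) (1 : ℕ))
        = ∑ r ∈ Iᶜ, Finsupp.single (r, v r) 1 := by
      rw [← sum_orderIso_perm Iᶜ hI' τ (fun r => Finsupp.single (r, v r) 1)]
      exact Finset.sum_congr rfl fun i _ => by rw [hB i]
    rw [e1, e2, Finset.sum_add_sum_compl]

theorem minor_expand (n m : ℕ) (K L : Finset (Fin n)) (hK : K.card = m) (hL : L.card = m) :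
    minorIJ n m (Matrix.of fun i j : Fin n => MvPolynomial.X (R := ℤ) (i, j)) K L hK hL
      = ∑ σ : Equiv.Perm (Fin m),
          ((Equiv.Perm.sign σ : ℤ) : MvPolynomial (Fin n × Fin n) ℤ) *
            MvPolynomial.monomial
              (∑ i : Fin m, Finsupp.single ((K.orderIsoOfFin hK (σ i) : Fin n),
                (L.orderIsoOfFin hL i : Fin n)) 1) 1 := by
  rw [minorIJ, Matrix.det_apply']
  refine Finset.sum_congr rfl fun σ _ => ?_
  rw [← prod_X_eq_monomial' Finset.univ
    (fun i => ((K.orderIsoOfFin hK (σ i) : Fin n), (L.orderIsoOfFin hL i : Fin n)))]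
  rfl

end Aux

/-- Let `I, J` be `k`-element subsets of `{1,…,n}`, let `X = (x_{ij})` be the
`n×n` matrix of independent variables and `v` a permutation. The coefficient of
`x_{1,v(1)} ⋯ x_{n,v(n)}` in `Δ_{I,J}(X) Δ_{Ī,J̄}(X)` equals
`(-1)^{inv_v(I) + inv_v(Ī)}` if `v(I) = J` and `0` otherwise. -/
theorem coeff_product_of_complementary_minors (n k : ℕ)
    (I J : Finset (Fin n)) (hI : I.card = k) (hJ : J.card = k)
    (v : Equiv.Perm (Fin n)) :
    MvPolynomial.coeff (∑ i : Fin n, Finsupp.single (i, v i) 1)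
      (minorIJ n k (Matrix.of fun i j : Fin n => MvPolynomial.X (R := ℤ) (i, j)) I J hI hJ
        * minorIJ n (n - k) (Matrix.of fun i j : Fin n => MvPolynomial.X (R := ℤ) (i, j))
            Iᶜ Jᶜ
            (by simp [Finset.card_compl, hI])
            (by simp [Finset.card_compl, hJ]))
      = if Finset.image v I = J then (-1) ^ (invOn n v I + invOn n v Iᶜ) else 0 := by
  classical
  have hI' : Iᶜ.card = n - k := by simp [Finset.card_compl, hI]
  have hJ' : Jᶜ.card = n - k := by simp [Finset.card_compl, hJ]
  rw [minor_expand n k I J hI hJ, minor_expand n (n - k) Iᶜ Jᶜ hI' hJ',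
    Finset.sum_mul_sum]
  rw [MvPolynomial.coeff_sum]
  simp only [MvPolynomial.coeff_sum]
  set T : (Fin n × Fin n) →₀ ℕ := ∑ i : Fin n, Finsupp.single (i, v i) 1 with hT
  have hterm : ∀ (σ : Equiv.Perm (Fin k)) (τ : Equiv.Perm (Fin (n - k))),
      MvPolynomial.coeff T
        ((((Equiv.Perm.sign σ : ℤ) : MvPolynomial (Fin n × Fin n) ℤ) *
            MvPolynomial.monomial
              (∑ i : Fin k, Finsupp.single ((I.orderIsoOfFin hI (σ i) : Fin n),
                (J.orderIsoOfFin hJ i : Fin n)) 1) 1) *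
         (((Equiv.Perm.sign τ : ℤ) : MvPolynomial (Fin n × Fin n) ℤ) *
            MvPolynomial.monomial
              (∑ i : Fin (n - k), Finsupp.single ((Iᶜ.orderIsoOfFin hI' (τ i) : Fin n),
                (Jᶜ.orderIsoOfFin hJ' i : Fin n)) 1) 1))
      = ((Equiv.Perm.sign σ : ℤ) * (Equiv.Perm.sign τ : ℤ)) *
          (if ((∑ i : Fin k, Finsupp.single ((I.orderIsoOfFin hI (σ i) : Fin n),
                (J.orderIsoOfFin hJ i : Fin n)) (1 : ℕ))
              + ∑ i : Fin (n - k), Finsupp.single ((Iᶜ.orderIsoOfFin hI' (τ i) : Fin n),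
                (Jᶜ.orderIsoOfFin hJ' i : Fin n)) 1) = T then 1 else 0) := by
    intro σ τ
    rw [mul_mul_mul_comm, ← Int.cast_mul, MvPolynomial.monomial_mul, mul_one,
      ← eq_intCast (MvPolynomial.C (σ := Fin n × Fin n)) ((Equiv.Perm.sign σ : ℤ) * _),
      MvPolynomial.coeff_C_mul, MvPolynomial.coeff_monomial]
  simp only [hterm]
  by_cases hv : Finset.image v I = J
  · have hv' : Finset.image v Iᶜ = Jᶜ := by rw [image_compl_eq, hv]
    set σ₀ := sigma0 I J hI hJ v hv with hσ₀
    set τ₀ := sigma0 Iᶜ Jᶜ hI' hJ' v hv' with hτ₀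
    have hcond : ∀ (σ : Equiv.Perm (Fin k)) (τ : Equiv.Perm (Fin (n - k))),
        (((∑ i : Fin k, Finsupp.single ((I.orderIsoOfFin hI (σ i) : Fin n),
              (J.orderIsoOfFin hJ i : Fin n)) (1 : ℕ))
            + ∑ i : Fin (n - k), Finsupp.single ((Iᶜ.orderIsoOfFin hI' (τ i) : Fin n),
              (Jᶜ.orderIsoOfFin hJ' i : Fin n)) 1) = T)
          ↔ (σ = σ₀ ∧ τ = τ₀) := by
      intro σ τ
      rw [hT, key_iff I J hI hJ hI' hJ' v σ τ, A_iff' hI hJ v hv, A_iff' hI' hJ' v hv']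
    have hstep : ∀ (σ : Equiv.Perm (Fin k)) (τ : Equiv.Perm (Fin (n - k))),
        ((Equiv.Perm.sign σ : ℤ) * (Equiv.Perm.sign τ : ℤ)) *
          (if ((∑ i : Fin k, Finsupp.single ((I.orderIsoOfFin hI (σ i) : Fin n),
                (J.orderIsoOfFin hJ i : Fin n)) (1 : ℕ))
              + ∑ i : Fin (n - k), Finsupp.single ((Iᶜ.orderIsoOfFin hI' (τ i) : Fin n),
                (Jᶜ.orderIsoOfFin hJ' i : Fin n)) 1) = T then 1 else 0)
        = if τ = τ₀ then (if σ = σ₀ then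
            ((Equiv.Perm.sign σ : ℤ) * (Equiv.Perm.sign τ : ℤ)) else 0) else 0 := by
      intro σ τ
      rw [if_congr (hcond σ τ) rfl rfl]
      by_cases h1 : σ = σ₀ <;> by_cases h2 : τ = τ₀ <;> simp [h1, h2]
    simp only [hstep]
    simp only [Finset.sum_ite_eq', Finset.mem_univ, if_true]
    rw [if_pos hv]
    have s1 : (Equiv.Perm.sign σ₀ : ℤ) = (-1) ^ invOn n v I := by
      rw [sign_eq_pow_invCount', ← invCount_sigma0 hI hJ v hv, ← hσ₀]
      push_cast
      rfl
    have s2 : (Equiv.Perm.sign τ₀ : ℤ) = (-1) ^ invOn n v Iᶜ := by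
      rw [sign_eq_pow_invCount', ← invCount_sigma0 hI' hJ' v hv', ← hτ₀]
      push_cast
      rfl
    rw [s1, s2, ← pow_add]
  · rw [if_neg hv]
    refine Finset.sum_eq_zero fun σ _ => Finset.sum_eq_zero fun τ _ => ?_
    rw [if_neg, mul_zero]
    intro hc
    rw [hT, key_iff I J hI hJ hI' hJ' v σ τ] at hc
    exact hv (image_of_A' hI hJ v σ hc.1)
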